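/- Let G : ℝ → ℝ satisfy G(x) > 0 and F(G(x)) = x for all x ∈ (0, 1/e). Then as x → 0⁺, log(1/x) = 1/(2·G(x)²) + O(log log(1/x)); that is, the function x ↦ log(1/x) − 1/(2·G(x)²) is O(log log(1/x)) as x → 0⁺. -/
import Mathlib


open Real Set Filter

/-- Standard normal density. -/
noncomputable def stdNormalPDF (x : ℝ) : ℝ :=
  Real.exp (-x ^ 2 / 2) / Real.sqrt (2 * Real.pi)

/-- `F x = ∫_0^x φ(1/v + v/2) dv`. -/
noncomputable def F (x : ℝ) : ℝ :=
  ∫ v in (0 : ℝ)..x, stdNormalPDF (1 / v + v / 2)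

open MeasureTheory

lemma sqrt2pi_ge_one : (1:ℝ) ≤ Real.sqrt (2 * Real.pi) := by
  rw [show (1:ℝ) = Real.sqrt 1 by simp]
  exact Real.sqrt_le_sqrt (by nlinarith [Real.pi_gt_three])

lemma sqrt2pi_le_exp : Real.sqrt (2 * Real.pi) ≤ Real.exp 1 := by
  rw [show Real.exp 1 = Real.sqrt ((Real.exp 1)^2) by
    rw [Real.sqrt_sq (Real.exp_pos 1).le]]
  apply Real.sqrt_le_sqrt
  nlinarith [Real.pi_lt_d2, Real.exp_one_gt_d9]

lemma f_nonneg (v : ℝ) : 0 ≤ stdNormalPDF (1 / v + v / 2) := by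
  unfold stdNormalPDF; positivity

lemma f_le_one (v : ℝ) : stdNormalPDF (1 / v + v / 2) ≤ 1 := by
  unfold stdNormalPDF
  rw [div_le_one (by positivity)]
  calc Real.exp (-(1/v + v/2) ^ 2 / 2) ≤ 1 := by
        rw [Real.exp_le_one_iff]
        have := sq_nonneg (1/v + v/2); linarith
    _ ≤ Real.sqrt (2 * Real.pi) := sqrt2pi_ge_one

lemma f_meas : Measurable (fun v : ℝ => stdNormalPDF (1 / v + v / 2)) := by
  have h : Continuous stdNormalPDF := by
    unfold stdNormalPDF; fun_prop
  exact h.measurable.comp ((measurable_const.div measurable_id).add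
    (measurable_id.div measurable_const))

lemma f_intble (a b : ℝ) :
    IntervalIntegrable (fun v : ℝ => stdNormalPDF (1 / v + v / 2)) volume a b := by
  rw [intervalIntegrable_iff]
  apply Measure.integrableOn_of_bounded (M := 1)
  · exact (measure_Ioc_lt_top).ne
  · exact f_meas.aestronglyMeasurable
  · filter_upwards with v
    rw [Real.norm_eq_abs, abs_of_nonneg (f_nonneg v)]
    exact f_le_one v

lemma F_nonneg {y : ℝ} (hy : 0 ≤ y) : 0 ≤ F y :=
  intervalIntegral.integral_nonneg hy (fun u _ => f_nonneg u)

lemma F_mono {a b : ℝ} (ha : 0 ≤ a) (hab : a ≤ b) : F a ≤ F b := by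
  have := intervalIntegral.integral_add_adjacent_intervals (f_intble 0 a) (f_intble a b)
  unfold F
  rw [← this]
  have : 0 ≤ ∫ v in a..b, stdNormalPDF (1 / v + v / 2) :=
    intervalIntegral.integral_nonneg hab (fun u _ => f_nonneg u)
  linarith

lemma F_upper {y : ℝ} (hy : 0 < y) : F y ≤ Real.exp (-(1/(2*y^2))) * y := by
  have h : ‖F y‖ ≤ Real.exp (-(1/(2*y^2))) * |y - 0| := by
    apply intervalIntegral.norm_integral_le_of_norm_le_const
    intro v hv
    rw [Set.uIoc_of_le hy.le] at hv
    obtain ⟨hv0, hvy⟩ := hv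
    rw [Real.norm_eq_abs, abs_of_nonneg (f_nonneg v)]
    unfold stdNormalPDF
    calc Real.exp (-(1/v + v/2) ^ 2 / 2) / Real.sqrt (2 * Real.pi)
        ≤ Real.exp (-(1/v + v/2) ^ 2 / 2) := by
          apply div_le_self (Real.exp_pos _).le sqrt2pi_ge_one
      _ ≤ Real.exp (-(1/(2*y^2))) := by
          apply Real.exp_le_exp.mpr
          have hsq : (1/v + v/2)^2 = 1/v^2 + 1 + v^2/4 := by
            field_simp; ring
          have h2 : 1/y^2 ≤ 1/v^2 :=
            one_div_le_one_div_of_le (by positivity) (by nlinarith)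
          have : 1/(2*y^2) = (1/y^2)/2 := by ring
          nlinarith [sq_nonneg v]
  calc F y ≤ ‖F y‖ := le_abs_self _
    _ ≤ Real.exp (-(1/(2*y^2))) * |y - 0| := h
    _ = Real.exp (-(1/(2*y^2))) * y := by rw [sub_zero, abs_of_pos hy]

lemma key_ineq {y : ℝ} (h0 : 0 < y) (h2 : y ≤ 1/2) :
    1/(2*(y - y^3)^2) ≤ 1/(2*y^2) + 4 := by
  have hy2 : y^2 ≤ 1/4 := by nlinarith
  have ha : 0 < y - y^3 := by nlinarith [mul_le_mul_of_nonneg_left hy2 h0.le]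
  have hrw : 1/(2*y^2) + 4 = (1 + 8*y^2)/(2*y^2) := by field_simp; ring
  rw [hrw, div_le_div_iff₀ (by positivity) (by positivity)]
  have h6 : 0 ≤ 6 - 15*y^2 + 8*y^4 := by nlinarith [sq_nonneg (y^2)]
  nlinarith [mul_nonneg (mul_nonneg (mul_nonneg (sq_nonneg y) (sq_nonneg y)) h6) (by norm_num : (0:ℝ) ≤ 2)]

lemma F_lower {y : ℝ} (h0 : 0 < y) (h2 : y ≤ 1/2) :
    Real.exp (-(1/(2*y^2)) - 8) * y^3 ≤ F y := by
  set a := y - y^3 with ha_def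
  have hy2 : y^2 ≤ 1/4 := by nlinarith
  have ha : 0 < a := by rw [ha_def]; nlinarith [mul_le_mul_of_nonneg_left hy2 h0.le]
  have hay : a ≤ y := by rw [ha_def]; nlinarith [mul_le_mul_of_nonneg_left hy2 h0.le]
  set c := Real.exp (-(1/(2*y^2)) - 8) with hc_def
  have hle : ∀ v ∈ Icc a y, c ≤ stdNormalPDF (1 / v + v / 2) := by
    intro v ⟨hva, hvy⟩
    have hv0 : 0 < v := lt_of_lt_of_le ha hva
    unfold stdNormalPDF
    have hsq : (1/v + v/2)^2/2 = 1/(2*v^2) + 1/2 + v^2/8 := by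
      field_simp; ring
    have h1 : 1/(2*v^2) ≤ 1/(2*a^2) :=
      one_div_le_one_div_of_le (by positivity) (by nlinarith)
    have hkey : 1/(2*a^2) ≤ 1/(2*y^2) + 4 := key_ineq h0 h2
    have hv8 : v^2/8 ≤ 1/8 := by nlinarith
    calc c ≤ Real.exp (-(1/v + v/2) ^ 2 / 2 - 1) := by
          rw [hc_def]
          apply Real.exp_le_exp.mpr
          have : -(1/v + v/2) ^ 2 / 2 = -((1/v + v/2)^2/2) := by ring
          rw [this, hsq]
          linarith
      _ = Real.exp (-(1/v + v/2) ^ 2 / 2) / Real.exp 1 := by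
          rw [Real.exp_sub]
      _ ≤ Real.exp (-(1/v + v/2) ^ 2 / 2) / Real.sqrt (2 * Real.pi) := by
          apply div_le_div_of_nonneg_left (Real.exp_pos _).le (by positivity) sqrt2pi_le_exp
  have hint : c * y^3 ≤ ∫ v in a..y, stdNormalPDF (1 / v + v / 2) := by
    have := intervalIntegral.integral_mono_on hay
      (_root_.intervalIntegrable_const (c := c)) (f_intble a y) hle
    rw [intervalIntegral.integral_const, smul_eq_mul] at this
    have hya : y - a = y^3 := by rw [ha_def]; ring
    rw [hya] at this
    linarith
  have hsplit := intervalIntegral.integral_add_adjacent_intervals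
    (f_intble 0 a) (f_intble a y)
  have hFa : 0 ≤ F a := F_nonneg ha.le
  unfold F at hFa ⊢
  rw [← hsplit]
  linarith
/-- `log(1/x) = 1/(2·G(x)²) + O(log log(1/x))` as `x → 0⁺`, where `G` inverts `F`. -/
theorem log_F_inv_asymptotics (G : ℝ → ℝ)
    (hGpos : ∀ x ∈ Set.Ioo 0 (1 / Real.exp 1), 0 < G x)
    (hG : ∀ x ∈ Set.Ioo 0 (1 / Real.exp 1), F (G x) = x) :
    (fun x : ℝ => Real.log (1 / x) - 1 / (2 * G x ^ 2))
      =O[nhdsWithin 0 (Set.Ioi 0)]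
        (fun x : ℝ => Real.log (Real.log (1 / x))) := by
  have hF12 : 0 < F (1/2) :=
    lt_of_lt_of_le (by positivity) (F_lower (by norm_num) (le_refl _))
  rw [Asymptotics.isBigO_iff]
  refine ⟨11, ?_⟩
  have hδ : (0:ℝ) < min (min (1 / Real.exp 1) (F (1/2))) (Real.exp (-Real.exp 1)) :=
    lt_min (lt_min (by positivity) hF12) (Real.exp_pos _)
  filter_upwards [Ioo_mem_nhdsGT_of_mem (show (0:ℝ) ∈ Ico 0 _ from ⟨le_refl 0, hδ⟩)]
    with x hx
  obtain ⟨hx0, hxδ⟩ := hx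
  have hx1 : x < 1/Real.exp 1 :=
    lt_of_lt_of_le hxδ ((min_le_left _ _).trans (min_le_left _ _))
  have hx2 : x < F (1/2) :=
    lt_of_lt_of_le hxδ ((min_le_left _ _).trans (min_le_right _ _))
  have hx3 : x < Real.exp (-Real.exp 1) := lt_of_lt_of_le hxδ (min_le_right _ _)
  have hmem : x ∈ Set.Ioo 0 (1/Real.exp 1) := ⟨hx0, hx1⟩
  set y := G x with hy_def
  have hy : 0 < y := hGpos x hmem
  have hFy : F y = x := hG x hmem
  have hy2 : y ≤ 1/2 := by
    by_contra h
    push_neg at h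
    have := F_mono (by norm_num : (0:ℝ) ≤ 1/2) h.le
    rw [hFy] at this; linarith
  set L := Real.log (1/x) with hL_def
  have hlogx : L = -Real.log x := by rw [hL_def, one_div, Real.log_inv]
  have hlogy : Real.log (1/y) = -Real.log y := by rw [one_div, Real.log_inv]
  -- upper bound on x
  have h1 : x ≤ Real.exp (-(1/(2*y^2))) := by
    calc x = F y := hFy.symm
      _ ≤ Real.exp (-(1/(2*y^2))) * y := F_upper hy
      _ ≤ Real.exp (-(1/(2*y^2))) * 1 := by
          nlinarith [Real.exp_pos (-(1/(2*y^2)))]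
      _ = Real.exp (-(1/(2*y^2))) := mul_one _
  have hA : 1/(2*y^2) ≤ L := by
    have := Real.log_le_log hx0 h1
    rw [Real.log_exp] at this
    rw [hlogx]; linarith
  -- lower bound on x
  have h2 : Real.exp (-(1/(2*y^2)) - 8) * y^3 ≤ x := hFy ▸ F_lower hy hy2
  have hB : L ≤ 1/(2*y^2) + 8 + 3 * Real.log (1/y) := by
    have hpos : (0:ℝ) < Real.exp (-(1/(2*y^2)) - 8) * y^3 := by positivity
    have h3 := Real.log_le_log hpos h2
    rw [Real.log_mul (ne_of_gt (Real.exp_pos _)) (by positivity),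
      Real.log_exp, Real.log_pow] at h3
    rw [hlogx, hlogy]
    push_cast at h3
    linarith
  -- L is large
  have hLe : Real.exp 1 ≤ L := by
    have := Real.log_lt_log hx0 hx3
    rw [Real.log_exp] at this
    rw [hlogx]; linarith
  have hL0 : 0 < L := lt_of_lt_of_le (Real.exp_pos 1) hLe
  have hlogL : 1 ≤ Real.log L := by
    calc (1:ℝ) = Real.log (Real.exp 1) := (Real.log_exp 1).symm
      _ ≤ Real.log L := Real.log_le_log (Real.exp_pos 1) hLe
  -- bound log(1/y)
  have hyinv : 1/y^2 ≤ 2*L := by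
    have h4 : 1/(2*y^2) = (1/y^2)/2 := by ring
    linarith [hA, h4 ▸ hA]
  have hC : Real.log (1/y) ≤ (Real.log 2 + Real.log L)/2 := by
    have e1 : Real.log (1/y^2) = 2 * Real.log (1/y) := by
      rw [show (1:ℝ)/y^2 = (1/y)^2 by ring, Real.log_pow]; push_cast; ring
    have e3 : Real.log (1/y^2) ≤ Real.log (2*L) :=
      Real.log_le_log (by positivity) hyinv
    rw [Real.log_mul two_ne_zero (ne_of_gt hL0)] at e3
    linarith
  have hlog2 : Real.log 2 ≤ 1 := by
    have := Real.log_le_sub_one_of_pos (by norm_num : (0:ℝ) < 2); linarith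
  rw [Real.norm_eq_abs, Real.norm_eq_abs]
  have hnn : 0 ≤ L - 1/(2*y^2) := by linarith
  rw [abs_of_nonneg hnn, abs_of_nonneg (by linarith : (0:ℝ) ≤ Real.log L)]
  linarith
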